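/- Complex form of the rotation lemma: let α, β, γ, δ be complex numbers with Re(α·conj(β)) = Re(γ·conj(δ)). Then there exists a real angle θ such that Re(e^{iθ}α)·Re(e^{iθ}β) = Re(e^{iθ}γ)·Re(e^{iθ}δ) and Im(e^{iθ}α)·Im(e^{iθ}β) = Im(e^{iθ}γ)·Im(e^{iθ}δ). -/

import Mathlib

open Complex

/-- Complex form of the rotation lemma: if `Re(α·conj β) = Re(γ·conj δ)`, then
there is an angle `θ` such that the numbers rotated by `e^{iθ}` satisfy
`Re(e^{iθ}α)·Re(e^{iθ}β) = Re(e^{iθ}γ)·Re(e^{iθ}δ)` and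
`Im(e^{iθ}α)·Im(e^{iθ}β) = Im(e^{iθ}γ)·Im(e^{iθ}δ)`. -/
theorem rotation_lemma_complex (α β γ δ : ℂ)
    (h : (α * (starRingEnd ℂ) β).re = (γ * (starRingEnd ℂ) δ).re) :
    ∃ θ : ℝ,
      (Complex.exp (θ * Complex.I) * α).re * (Complex.exp (θ * Complex.I) * β).re =
        (Complex.exp (θ * Complex.I) * γ).re * (Complex.exp (θ * Complex.I) * δ).re ∧
      (Complex.exp (θ * Complex.I) * α).im * (Complex.exp (θ * Complex.I) * β).im =
        (Complex.exp (θ * Complex.I) * γ).im * (Complex.exp (θ * Complex.I) * δ).im := by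
  simp only [mul_re, conj_re, conj_im, mul_neg, mul_comm] at h
  set w : ℂ := α * β - γ * δ with hw
  by_cases hw0 : w = 0
  · refine ⟨0, ?_, ?_⟩ <;>
    · have h1 : w.re = 0 := by rw [hw0]; simp
      have h2 : w.im = 0 := by rw [hw0]; simp
      simp only [hw, sub_re, sub_im, mul_re, mul_im] at h1 h2
      simp only [Complex.ofReal_zero, zero_mul, Complex.exp_zero, one_mul]
      nlinarith [h, h1, h2]
  · set θ : ℝ := (Real.pi / 2 - w.arg) / 2 with hθ
    have h2θ : 2 * θ = Real.pi / 2 - w.arg := by rw [hθ]; ring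
    have habs : ‖w‖ ≠ 0 := by simpa using hw0
    have hcos : Real.cos (2 * θ) = w.im / ‖w‖ := by
      rw [h2θ, Real.cos_pi_div_two_sub, Complex.sin_arg]
    have hsin : Real.sin (2 * θ) = w.re / ‖w‖ := by
      rw [h2θ, Real.sin_pi_div_two_sub, Complex.cos_arg hw0]
    have key : (Real.cos θ ^ 2 - Real.sin θ ^ 2) * w.re - 2 * Real.sin θ * Real.cos θ * w.im = 0 := by
      have e1 := Real.cos_two_mul θ
      have e2 := Real.sin_two_mul θ
      have e3 := Real.sin_sq_add_cos_sq θ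
      rw [hcos] at e1
      rw [hsin] at e2
      field_simp at e1 e2
      linear_combination (Real.cos θ ^ 2 - Real.sin θ ^ 2) * e2 -
        2 * Real.sin θ * Real.cos θ * e1 -
        2 * Real.sin θ * Real.cos θ * ‖w‖ * e3
    have hre : w.re = α.re * β.re - α.im * β.im - (γ.re * δ.re - γ.im * δ.im) := by
      simp [hw, mul_re]
    have him : w.im = α.re * β.im + α.im * β.re - (γ.re * δ.im + γ.im * δ.re) := by
      simp [hw, mul_im]
    rw [hre, him] at key
    refine ⟨θ, ?_, ?_⟩ <;>
    · simp only [mul_re, mul_im, Complex.exp_ofReal_mul_I_re, Complex.exp_ofReal_mul_I_im]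
      nlinarith [key, h]
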